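/- For every (a;b) ∈ C^{(N)}_{k,l} with k ≥ 1, there exist integers l₁,…,l_k ∈ {0,1} with l₁ + ⋯ + l_k = l and combinatorial paths (a_j;b_j) ∈ C^{(N)}_{1,l_j} for j = 1,…,k such that Σ_{j=1}^k (a_j;b_j) = (a;b) (componentwise sum). -/

import Mathlib

/-- `(α,β,γ)` is an admissible Verlinde triple of level `k`. -/
def IsAdm (k α β γ : ℕ) : Prop :=
  ∃ x y z : ℕ, x + y + z ≤ k ∧ α = x + y ∧ β = y + z ∧ γ = x + z
/-- `x(α,β,γ) = (α+γ-β)/2` (exact on admissible triples). -/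
def xA (α β γ : ℕ) : ℕ := (α + γ - β) / 2
/-- `y(α,β,γ) = (α+β-γ)/2` (exact on admissible triples). -/
def yA (α β γ : ℕ) : ℕ := (α + β - γ) / 2
/-- `z(α,β,γ) = (β+γ-α)/2` (exact on admissible triples). -/
def zA (α β γ : ℕ) : ℕ := (β + γ - α) / 2
/-- `a, b : ℕ → ℕ` represent a combinatorial path
`(a_{N-1},…,a_0; b_{N-1},…,b_1)` of length `N`, level `k` and weight `l`:
`b 0 = 0` is a dummy value, entries vanish from index `N` on, and the
conventions `b_{-1} = l`, `b_∞ = k`, `a_{-1} = a_∞ = 0` are built into the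
inequalities (the cases `i = -1` and `j = ∞` of the trapezoid condition are
listed separately). -/
def IsCombPath (k l N : ℕ) (a b : ℕ → ℕ) : Prop :=
  (∀ i, a i ≤ k) ∧ (∀ i, b i ≤ k) ∧
  b 0 = 0 ∧
  (∀ i, N ≤ i → a i = 0) ∧ (∀ i, N ≤ i → b i = 0) ∧
  a 0 ≤ l ∧
  (∀ i, a i + b (i + 1) + a (i + 1) ≤ k) ∧
  (∀ i, b i + a i + b (i + 1) ≤ k) ∧
  (∀ i j : ℕ, i < j →
    ∑ s ∈ Finset.Icc i j, b s ≤ k + ∑ s ∈ Finset.Ico (i + 1) (j - 1), a s) ∧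
  (∀ j : ℕ, l + ∑ s ∈ Finset.Icc 0 j, b s ≤ k + ∑ s ∈ Finset.Ico 0 (j - 1), a s) ∧
  (∀ i : ℕ, (∑ s ∈ Finset.Icc i N, b s) + k ≤ k + ∑ s ∈ Finset.Icc (i + 1) N, a s) ∧
  (l + (∑ s ∈ Finset.Icc 0 N, b s) + k ≤ k + ∑ s ∈ Finset.Icc 0 N, a s)

namespace Stmt3Aux

set_option linter.unusedSectionVars false

open Finset

variable {α : Type*} [DecidableEq α]

/-- pick a subset of `s` of cardinality `n` (junk `∅` if impossible). -/
noncomputable def pick (s : Finset α) (n : ℕ) : Finset α :=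
  if h : ∃ t ⊆ s, t.card = n then h.choose else ∅

lemma pick_subset (s : Finset α) (n : ℕ) : pick s n ⊆ s := by
  unfold pick
  split
  · exact (Exists.choose_spec ‹∃ t ⊆ s, t.card = n›).1
  · exact empty_subset s

lemma pick_card {s : Finset α} {n : ℕ} (h : n ≤ s.card) : (pick s n).card = n := by
  have hex : ∃ t ⊆ s, t.card = n := Finset.exists_subset_card_eq h
  unfold pick
  rw [dif_pos hex]
  exact hex.choose_spec.2

section Machine

variable (k l : ℕ) (a b : ℕ → ℕ)

/-- one-step data: given state `st = (pend, aprev)` at index `q`. -/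
noncomputable def bsF (st : Finset (Fin k) × Finset (Fin k)) (q : ℕ) : Finset (Fin k) :=
  pick (univ \ (st.1 ∪ st.2)) (b q)

noncomputable def svF (st : Finset (Fin k) × Finset (Fin k)) (q : ℕ) : Finset (Fin k) :=
  pick st.1 (min (a q) st.1.card)

noncomputable def exF (st : Finset (Fin k) × Finset (Fin k)) (q : ℕ) : Finset (Fin k) :=
  pick (univ \ ((st.2 ∪ bsF k b st q) ∪ st.1)) (a q - st.1.card)

noncomputable def asF (st : Finset (Fin k) × Finset (Fin k)) (q : ℕ) : Finset (Fin k) :=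
  svF k a st q ∪ exF k a b st q

noncomputable def mach : ℕ → Finset (Fin k) × Finset (Fin k) := fun q =>
  Nat.rec (pick univ l, (∅ : Finset (Fin k)))
    (fun q' st => ((st.1 \ svF k a st q') ∪ bsF k b st q', asF k a b st q')) q

noncomputable def Pend (q : ℕ) : Finset (Fin k) := (mach k l a b q).1
noncomputable def Aprev (q : ℕ) : Finset (Fin k) := (mach k l a b q).2
noncomputable def Bs (q : ℕ) : Finset (Fin k) := bsF k b (mach k l a b q) q
noncomputable def Sv (q : ℕ) : Finset (Fin k) := svF k a (mach k l a b q) q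
noncomputable def Exr (q : ℕ) : Finset (Fin k) := exF k a b (mach k l a b q) q
noncomputable def As (q : ℕ) : Finset (Fin k) := asF k a b (mach k l a b q) q

lemma Pend_zero : Pend k l a b 0 = pick univ l := rfl
lemma Aprev_zero : Aprev k l a b 0 = ∅ := rfl
lemma Pend_succ (q : ℕ) :
    Pend k l a b (q + 1) = (Pend k l a b q \ Sv k l a b q) ∪ Bs k l a b q := rfl
lemma Aprev_succ (q : ℕ) : Aprev k l a b (q + 1) = As k l a b q := rfl
lemma As_eq (q : ℕ) : As k l a b q = Sv k l a b q ∪ Exr k l a b q := rfl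
lemma Bs_eq (q : ℕ) :
    Bs k l a b q = pick (univ \ (Pend k l a b q ∪ Aprev k l a b q)) (b q) := rfl
lemma Sv_eq (q : ℕ) :
    Sv k l a b q = pick (Pend k l a b q) (min (a q) (Pend k l a b q).card) := rfl
lemma Exr_eq (q : ℕ) :
    Exr k l a b q = pick (univ \ ((Aprev k l a b q ∪ Bs k l a b q) ∪ Pend k l a b q))
      (a q - (Pend k l a b q).card) := rfl

variable {k l a b}

lemma Sv_subset_pend (q : ℕ) : Sv k l a b q ⊆ Pend k l a b q := by
  rw [Sv_eq]; exact pick_subset _ _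

lemma Sv_subset_as (q : ℕ) : Sv k l a b q ⊆ As k l a b q := by
  rw [As_eq]; exact subset_union_left

lemma mem_Bs {j : Fin k} {q : ℕ} (hj : j ∈ Bs k l a b q) :
    j ∉ Pend k l a b q ∧ j ∉ Aprev k l a b q := by
  rw [Bs_eq] at hj
  have h := pick_subset _ _ hj
  rw [mem_sdiff, mem_union] at h
  exact ⟨fun hc => h.2 (Or.inl hc), fun hc => h.2 (Or.inr hc)⟩

lemma mem_Exr {j : Fin k} {q : ℕ} (hj : j ∈ Exr k l a b q) :
    j ∉ Aprev k l a b q ∧ j ∉ Bs k l a b q ∧ j ∉ Pend k l a b q := by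
  rw [Exr_eq] at hj
  have h := pick_subset _ _ hj
  rw [mem_sdiff, mem_union, mem_union] at h
  exact ⟨fun hc => h.2 (Or.inl (Or.inl hc)), fun hc => h.2 (Or.inl (Or.inr hc)),
    fun hc => h.2 (Or.inr hc)⟩

/-- after taking an `a`, a colour is not pending at the next step. -/
lemma mem_As_not_pend_succ {j : Fin k} {q : ℕ} (hj : j ∈ As k l a b q) :
    j ∉ Pend k l a b (q + 1) := by
  rw [Pend_succ, mem_union, mem_sdiff]
  rw [As_eq, mem_union] at hj
  rcases hj with hs | he
  · rintro (⟨-, hns⟩ | hb)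
    · exact hns hs
    · exact (mem_Bs hb).1 (Sv_subset_pend q hs)
  · rintro (⟨hp, -⟩ | hb)
    · exact (mem_Exr he).2.2 hp
    · exact (mem_Exr he).2.1 hb

lemma pend_aprev_disj (q : ℕ) {j : Fin k}
    (hp : j ∈ Pend k l a b q) (ha : j ∈ Aprev k l a b q) : False := by
  cases q with
  | zero => rw [Aprev_zero] at ha; exact absurd ha (notMem_empty j)
  | succ q' =>
      rw [Aprev_succ] at ha
      exact mem_As_not_pend_succ ha hp

lemma mem_As_not_aprev {j : Fin k} {q : ℕ} (hj : j ∈ As k l a b q) :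
    j ∉ Aprev k l a b q := by
  intro hc
  rw [As_eq, mem_union] at hj
  rcases hj with hs | he
  · exact pend_aprev_disj q (Sv_subset_pend q hs) hc
  · exact (mem_Exr he).1 hc

lemma mem_As_not_bs {j : Fin k} {q : ℕ} (hj : j ∈ As k l a b q) : j ∉ Bs k l a b q := by
  intro hb
  rw [As_eq, mem_union] at hj
  rcases hj with hs | he
  · exact (mem_Bs hb).1 (Sv_subset_pend q hs)
  · exact (mem_Exr he).2.1 hb

lemma mem_Bs_pend_succ {j : Fin k} {q : ℕ} (hj : j ∈ Bs k l a b q) :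
    j ∈ Pend k l a b (q + 1) := by
  rw [Pend_succ, mem_union]; exact Or.inr hj

lemma pend_stay {j : Fin k} {q : ℕ} (hp : j ∈ Pend k l a b q) (ha : j ∉ As k l a b q) :
    j ∈ Pend k l a b (q + 1) := by
  rw [Pend_succ, mem_union, mem_sdiff]
  exact Or.inl ⟨hp, fun hs => ha (Sv_subset_as q hs)⟩

/-- `Bs (q+1)` avoids `Bs q` (through `Pend (q+1)`). -/
lemma bs_succ_not_bs {j : Fin k} {q : ℕ} (hj : j ∈ Bs k l a b (q + 1)) :
    j ∉ Bs k l a b q :=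
  fun hb => (mem_Bs hj).1 (mem_Bs_pend_succ hb)

lemma bs_succ_not_as {j : Fin k} {q : ℕ} (hj : j ∈ Bs k l a b (q + 1)) :
    j ∉ As k l a b q := by
  have := (mem_Bs hj).2
  rw [Aprev_succ] at this
  exact this

lemma as_succ_not_as {j : Fin k} {q : ℕ} (hj : j ∈ As k l a b (q + 1)) :
    j ∉ As k l a b q := by
  have := mem_As_not_aprev hj
  rw [Aprev_succ] at this
  exact this

attribute [irreducible] pick mach Pend Aprev Bs Sv Exr As

-- chunk 2 : appended inside section Machine (variables k l a b in scope)

variable (l a b) in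
/-- number of pending colours before processing index `q`. -/
def pfun : ℕ → ℕ := fun q => Nat.rec l (fun q' p => (p - a q') + b q') q

variable (a) in
/-- number of `a`-ones at the previous index. -/
def A0 : ℕ → ℕ := fun q => Nat.rec 0 (fun q' _ => a q') q

lemma pfun_zero : pfun l a b 0 = l := rfl
lemma pfun_succ (q : ℕ) : pfun l a b (q + 1) = (pfun l a b q - a q) + b q := rfl
lemma A0_zero : A0 a 0 = 0 := rfl
lemma A0_succ (q : ℕ) : A0 a (q + 1) = a q := rfl

lemma pfun_le (t : ℕ) (C : ℤ)
    (h0 : (l : ℤ) + ∑ s ∈ range t, (b s : ℤ) ≤ C + ∑ s ∈ range t, (a s : ℤ))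
    (hw : ∀ q₀, 1 ≤ q₀ → q₀ ≤ t →
      (∑ s ∈ Ico (q₀ - 1) t, (b s : ℤ)) ≤ C + ∑ s ∈ Ico q₀ t, (a s : ℤ)) :
    (pfun l a b t : ℤ) ≤ C := by
  induction t generalizing C with
  | zero => simpa [pfun_zero] using h0
  | succ t ih =>
    have hsum0 := h0
    rw [Finset.sum_range_succ, Finset.sum_range_succ] at hsum0
    have hbt : (b t : ℤ) ≤ C := by
      have h1 := hw (t + 1) (by omega) le_rfl
      rw [Nat.add_sub_cancel, Finset.sum_Ico_succ_top (le_refl t)] at h1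
      simpa using h1
    by_cases hc : pfun l a b t ≤ a t
    · have he : pfun l a b (t + 1) = b t := by rw [pfun_succ]; omega
      rw [he]; exact hbt
    · push_neg at hc
      have IH : (pfun l a b t : ℤ) ≤ C + (a t : ℤ) - (b t : ℤ) := by
        apply ih
        · linarith
        · intro q₀ h1 h2
          have h3 := hw q₀ h1 (h2.trans (Nat.le_succ t))
          rw [Finset.sum_Ico_succ_top (by omega : q₀ - 1 ≤ t),
            Finset.sum_Ico_succ_top (by omega : q₀ ≤ t)] at h3
          linarith
      have he : (pfun l a b (t + 1) : ℤ) = (pfun l a b t : ℤ) - a t + b t := by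
        rw [pfun_succ]; omega
      rw [he]; linarith

lemma cards_aux (hB1 : ∀ q, pfun l a b q + A0 a q + b q ≤ k)
    (hW1' : ∀ q, A0 a q + b q + a q ≤ k) (q : ℕ)
    (hpc : (Pend k l a b q).card = pfun l a b q)
    (hac : (Aprev k l a b q).card = A0 a q) :
    (Bs k l a b q).card = b q ∧ (As k l a b q).card = a q ∧
    (Exr k l a b q).card = a q - pfun l a b q ∧
    (Pend k l a b (q + 1)).card = pfun l a b (q + 1) ∧
    (Aprev k l a b (q + 1)).card = A0 a (q + 1) := by
  have hdisjPA : Disjoint (Pend k l a b q) (Aprev k l a b q) :=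
    Finset.disjoint_left.mpr (fun _ hp ha => pend_aprev_disj q hp ha)
  have hPAcard : (Pend k l a b q ∪ Aprev k l a b q).card = pfun l a b q + A0 a q := by
    rw [card_union_of_disjoint hdisjPA, hpc, hac]
  have hcompl : (univ \ (Pend k l a b q ∪ Aprev k l a b q)).card
      = k - (pfun l a b q + A0 a q) := by
    rw [card_sdiff_of_subset (subset_univ _), hPAcard, card_univ, Fintype.card_fin]
  have cardBs : (Bs k l a b q).card = b q := by
    rw [Bs_eq]
    exact pick_card (by rw [hcompl]; have := hB1 q; omega)
  have cardSv : (Sv k l a b q).card = min (a q) (pfun l a b q) := by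
    rw [Sv_eq, hpc]
    exact pick_card (le_of_le_of_eq (min_le_right _ _) hpc.symm)
  have hdisjAB : Disjoint (Aprev k l a b q) (Bs k l a b q) :=
    Finset.disjoint_left.mpr (fun _ ha hb => (mem_Bs hb).2 ha)
  have hdisjABP : Disjoint (Aprev k l a b q ∪ Bs k l a b q) (Pend k l a b q) :=
    Finset.disjoint_left.mpr (by
      intro j hj hp
      rcases mem_union.1 hj with ha | hb
      · exact pend_aprev_disj q hp ha
      · exact (mem_Bs hb).1 hp)
  have hcompl2 : (univ \ ((Aprev k l a b q ∪ Bs k l a b q) ∪ Pend k l a b q)).card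
      = k - (A0 a q + b q + pfun l a b q) := by
    rw [card_sdiff_of_subset (subset_univ _), card_union_of_disjoint hdisjABP,
      card_union_of_disjoint hdisjAB, hpc, hac, cardBs, card_univ, Fintype.card_fin]
  have cardEx : (Exr k l a b q).card = a q - pfun l a b q := by
    rw [Exr_eq, hpc]
    exact pick_card (by rw [hcompl2]; have h1 := hW1' q; have h2 := hB1 q; omega)
  have hdisjSE : Disjoint (Sv k l a b q) (Exr k l a b q) :=
    Finset.disjoint_left.mpr (fun _ hs he => (mem_Exr he).2.2 (Sv_subset_pend q hs))
  have cardAs : (As k l a b q).card = a q := by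
    rw [As_eq, card_union_of_disjoint hdisjSE, cardSv, cardEx]
    omega
  refine ⟨cardBs, cardAs, cardEx, ?_, ?_⟩
  · rw [Pend_succ, card_union_of_disjoint
      (Finset.disjoint_left.mpr (fun _ hx hb => (mem_Bs hb).1 (mem_sdiff.1 hx).1)),
      card_sdiff_of_subset (Sv_subset_pend q), hpc, cardSv, cardBs, pfun_succ]
    omega
  · rw [Aprev_succ, cardAs, A0_succ]

lemma cards (hl : l ≤ k) (hB1 : ∀ q, pfun l a b q + A0 a q + b q ≤ k)
    (hW1' : ∀ q, A0 a q + b q + a q ≤ k) :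
    ∀ q, (Pend k l a b q).card = pfun l a b q ∧ (Aprev k l a b q).card = A0 a q := by
  intro q
  induction q with
  | zero =>
      constructor
      · rw [Pend_zero, pfun_zero]
        exact pick_card (by rw [card_univ, Fintype.card_fin]; exact hl)
      · rw [Aprev_zero, A0_zero]; exact card_empty
  | succ q ih =>
      have h := cards_aux hB1 hW1' q ih.1 ih.2
      exact ⟨h.2.2.2.1, h.2.2.2.2⟩

-- chunk 3 : strands

variable (k l a b) in
noncomputable def avF (j : Fin k) (q : ℕ) : ℕ := if j ∈ As k l a b q then 1 else 0
variable (k l a b) in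
noncomputable def bvF (j : Fin k) (q : ℕ) : ℕ := if j ∈ Bs k l a b q then 1 else 0
variable (k l a b) in
noncomputable def lvF (j : Fin k) : ℕ := if j ∈ Pend k l a b 0 then 1 else 0
variable (k l a b) in
noncomputable def nu (j : Fin k) (t : ℕ) : ℕ := if j ∈ Pend k l a b (t + 1) then 1 else 0

lemma nu_step {j : Fin k} (t : ℕ) (hb : j ∉ Bs k l a b (t + 1)) :
    nu k l a b j t ≤ avF k l a b j (t + 1) + nu k l a b j (t + 1) := by
  by_cases hp : j ∈ Pend k l a b (t + 1)
  · by_cases ha : j ∈ As k l a b (t + 1)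
    · have h1 : avF k l a b j (t + 1) = 1 := by unfold avF; exact if_pos ha
      have h2 : nu k l a b j t ≤ 1 := by unfold nu; split <;> omega
      omega
    · have h1 : j ∈ Pend k l a b (t + 1 + 1) := pend_stay hp ha
      have h2 : nu k l a b j (t + 1) = 1 := by unfold nu; exact if_pos h1
      have h3 : nu k l a b j t ≤ 1 := by unfold nu; split <;> omega
      omega
  · have h1 : nu k l a b j t = 0 := by unfold nu; exact if_neg hp
    omega

/-- main alternation invariant. -/
lemma Kp (j : Fin k) (i : ℕ) : ∀ t, i ≤ t →
    (∑ s ∈ Ico i (t + 1), bvF k l a b j s)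
      ≤ (∑ s ∈ Ico (i + 1) (t + 1), avF k l a b j s) + nu k l a b j t := by
  intro t ht
  induction t, ht using Nat.le_induction with
  | base =>
      have h1 : Ico i (i + 1) = {i} := by rw [Finset.Ico_add_one_right_eq_Icc, Finset.Icc_self]
      rw [h1, Finset.sum_singleton, Finset.Ico_self, Finset.sum_empty]
      by_cases hb : j ∈ Bs k l a b i
      · have h2 : nu k l a b j i = 1 := by unfold nu; exact if_pos (mem_Bs_pend_succ hb)
        have h3 : bvF k l a b j i = 1 := by unfold bvF; exact if_pos hb
        omega
      · have h3 : bvF k l a b j i = 0 := by unfold bvF; exact if_neg hb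
        omega
  | succ t ht IH =>
      rw [Finset.sum_Ico_succ_top (by omega : i ≤ t + 1) (bvF k l a b j),
        Finset.sum_Ico_succ_top (by omega : i + 1 ≤ t + 1) (avF k l a b j)]
      by_cases hb : j ∈ Bs k l a b (t + 1)
      · have hnp : j ∉ Pend k l a b (t + 1) := (mem_Bs hb).1
        have hν0 : nu k l a b j t = 0 := by unfold nu; exact if_neg hnp
        have hν1 : nu k l a b j (t + 1) = 1 := by unfold nu; exact if_pos (mem_Bs_pend_succ hb)
        have hbv : bvF k l a b j (t + 1) = 1 := by unfold bvF; exact if_pos hb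
        omega
      · have hbv : bvF k l a b j (t + 1) = 0 := by unfold bvF; exact if_neg hb
        have := nu_step t hb
        omega

/-- alternation invariant with the virtual initial `b`. -/
lemma K0p (j : Fin k) : ∀ t,
    lvF k l a b j + (∑ s ∈ Ico 0 (t + 1), bvF k l a b j s)
      ≤ (∑ s ∈ Ico 0 (t + 1), avF k l a b j s) + nu k l a b j t := by
  intro t
  induction t with
  | zero =>
      have h1 : Ico 0 1 = {0} := by simp
      rw [h1, Finset.sum_singleton, Finset.sum_singleton]
      by_cases hb : j ∈ Bs k l a b 0
      · have hnp : j ∉ Pend k l a b 0 := (mem_Bs hb).1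
        have h2 : lvF k l a b j = 0 := by unfold lvF; exact if_neg hnp
        have h3 : nu k l a b j 0 = 1 := by unfold nu; exact if_pos (mem_Bs_pend_succ hb)
        have h4 : bvF k l a b j 0 = 1 := by unfold bvF; exact if_pos hb
        omega
      · have h4 : bvF k l a b j 0 = 0 := by unfold bvF; exact if_neg hb
        by_cases hp : j ∈ Pend k l a b 0
        · by_cases ha : j ∈ As k l a b 0
          · have h5 : avF k l a b j 0 = 1 := by unfold avF; exact if_pos ha
            have h6 : lvF k l a b j ≤ 1 := by unfold lvF; split <;> omega
            omega
          · have h5 : nu k l a b j 0 = 1 := by unfold nu; exact if_pos (pend_stay hp ha)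
            have h6 : lvF k l a b j ≤ 1 := by unfold lvF; split <;> omega
            omega
        · have h5 : lvF k l a b j = 0 := by unfold lvF; exact if_neg hp
          omega
  | succ t IH =>
      rw [Finset.sum_Ico_succ_top (by omega : 0 ≤ t + 1) (bvF k l a b j),
        Finset.sum_Ico_succ_top (by omega : 0 ≤ t + 1) (avF k l a b j)]
      by_cases hb : j ∈ Bs k l a b (t + 1)
      · have hnp : j ∉ Pend k l a b (t + 1) := (mem_Bs hb).1
        have hν0 : nu k l a b j t = 0 := by unfold nu; exact if_neg hnp
        have hν1 : nu k l a b j (t + 1) = 1 := by unfold nu; exact if_pos (mem_Bs_pend_succ hb)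
        have hbv : bvF k l a b j (t + 1) = 1 := by unfold bvF; exact if_pos hb
        omega
      · have hbv : bvF k l a b j (t + 1) = 0 := by unfold bvF; exact if_neg hb
        have := nu_step t hb
        omega

lemma av_nu_le {j : Fin k} (t : ℕ) : avF k l a b j t + nu k l a b j t ≤ 1 := by
  by_cases ha : j ∈ As k l a b t
  · have h1 : nu k l a b j t = 0 := by unfold nu; exact if_neg (mem_As_not_pend_succ ha)
    have h2 : avF k l a b j t = 1 := by unfold avF; exact if_pos ha
    omega
  · have h1 : avF k l a b j t = 0 := by unfold avF; exact if_neg ha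
    have h2 : nu k l a b j t ≤ 1 := by unfold nu; split <;> omega
    omega

/-- trapezoid condition for a strand. -/
lemma strand9 (j : Fin k) (i t : ℕ) (hit : i < t) :
    (∑ s ∈ Icc i t, bvF k l a b j s)
      ≤ 1 + ∑ s ∈ Ico (i + 1) (t - 1), avF k l a b j s := by
  obtain ⟨r, rfl⟩ : ∃ r, t = r + 1 := ⟨t - 1, by omega⟩
  rw [← Finset.Ico_add_one_right_eq_Icc,
    Finset.sum_Ico_succ_top (by omega : i ≤ r + 1) (bvF k l a b j)]
  rcases Nat.eq_or_lt_of_le hit with he | hlt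
  · -- t = i + 1
    have h0 : i = r := by omega
    subst h0
    have h1 : Ico i (i + 1) = {i} := by rw [Finset.Ico_add_one_right_eq_Icc, Finset.Icc_self]
    rw [h1, Finset.sum_singleton]
    by_cases hb : j ∈ Bs k l a b (i + 1)
    · have h2 : bvF k l a b j i = 0 := by unfold bvF; exact if_neg (bs_succ_not_bs hb)
      have h3 : bvF k l a b j (i + 1) = 1 := by unfold bvF; exact if_pos hb
      omega
    · have h3 : bvF k l a b j (i + 1) = 0 := by unfold bvF; exact if_neg hb
      have h2 : bvF k l a b j i ≤ 1 := by unfold bvF; split <;> omega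
      omega
  · -- i + 1 ≤ r, so i ≤ r - 1 and splits are fine
    have hKp := Kp (l := l) (a := a) (b := b) j i r (by omega)
    rw [Finset.sum_Ico_succ_top (by omega : i + 1 ≤ r) (avF k l a b j)] at hKp
    have hsub : (r + 1) - 1 = r := by omega
    rw [hsub]
    by_cases hb : j ∈ Bs k l a b (r + 1)
    · have hnp : j ∉ Pend k l a b (r + 1) := (mem_Bs hb).1
      have hν0 : nu k l a b j r = 0 := by unfold nu; exact if_neg hnp
      have hav : avF k l a b j r = 0 := by unfold avF; exact if_neg (bs_succ_not_as hb)
      have hbv : bvF k l a b j (r + 1) = 1 := by unfold bvF; exact if_pos hb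
      omega
    · have hbv : bvF k l a b j (r + 1) = 0 := by unfold bvF; exact if_neg hb
      have := av_nu_le (a := a) (b := b) (l := l) (j := j) r
      omega

/-- initial trapezoid condition for a strand. -/
lemma strand10 (j : Fin k) (t : ℕ) :
    lvF k l a b j + (∑ s ∈ Icc 0 t, bvF k l a b j s)
      ≤ 1 + ∑ s ∈ Ico 0 (t - 1), avF k l a b j s := by
  cases t with
  | zero =>
      rw [Finset.Icc_self, Finset.sum_singleton]
      by_cases hb : j ∈ Bs k l a b 0
      · have h2 : lvF k l a b j = 0 := by unfold lvF; exact if_neg (mem_Bs hb).1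
        have h4 : bvF k l a b j 0 ≤ 1 := by unfold bvF; split <;> omega
        omega
      · have h4 : bvF k l a b j 0 = 0 := by unfold bvF; exact if_neg hb
        have h6 : lvF k l a b j ≤ 1 := by unfold lvF; split <;> omega
        omega
  | succ r =>
      rw [← Finset.Ico_add_one_right_eq_Icc,
        Finset.sum_Ico_succ_top (by omega : 0 ≤ r + 1) (bvF k l a b j)]
      have hK := K0p (a := a) (b := b) (l := l) j r
      have hsub : (r + 1) - 1 = r := by omega
      rw [hsub]
      rcases Nat.eq_zero_or_pos r with h0 | hpos
      · subst h0
        have h1 : Ico 0 1 = {0} := by simp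
        rw [h1, Finset.sum_singleton, Finset.sum_singleton] at hK
        rw [Finset.Ico_self, Finset.sum_empty, h1, Finset.sum_singleton]
        by_cases hb : j ∈ Bs k l a b (0 + 1)
        · have hν0 : nu k l a b j 0 = 0 := by unfold nu; exact if_neg (mem_Bs hb).1
          have hav : avF k l a b j 0 = 0 := by unfold avF; exact if_neg (bs_succ_not_as hb)
          have hbv : bvF k l a b j (0 + 1) = 1 := by unfold bvF; exact if_pos hb
          omega
        · have hbv : bvF k l a b j (0 + 1) = 0 := by unfold bvF; exact if_neg hb
          have := av_nu_le (a := a) (b := b) (l := l) (j := j) 0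
          omega
      · obtain ⟨r', rfl⟩ : ∃ r', r = r' + 1 := ⟨r - 1, by omega⟩
        rw [Finset.sum_Ico_succ_top (by omega : 0 ≤ r' + 1) (avF k l a b j)] at hK
        by_cases hb : j ∈ Bs k l a b (r' + 1 + 1)
        · have hν0 : nu k l a b j (r' + 1) = 0 := by unfold nu; exact if_neg (mem_Bs hb).1
          have hav : avF k l a b j (r' + 1) = 0 := by unfold avF; exact if_neg (bs_succ_not_as hb)
          have hbv : bvF k l a b j (r' + 1 + 1) = 1 := by unfold bvF; exact if_pos hb
          omega
        · have hbv : bvF k l a b j (r' + 1 + 1) = 0 := by unfold bvF; exact if_neg hb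
          have := av_nu_le (a := a) (b := b) (l := l) (j := j) (r' + 1)
          omega

-- chunk 4 : remaining strand conditions and final sums

lemma strand7 (j : Fin k) (i : ℕ) :
    avF k l a b j i + bvF k l a b j (i + 1) + avF k l a b j (i + 1) ≤ 1 := by
  by_cases h1 : j ∈ As k l a b i
  · have e1 : avF k l a b j i = 1 := by unfold avF; exact if_pos h1
    have e2 : bvF k l a b j (i + 1) = 0 := by
      unfold bvF
      refine if_neg (fun hb => ?_)
      exact bs_succ_not_as hb h1
    have e3 : avF k l a b j (i + 1) = 0 := by
      unfold avF
      refine if_neg (fun ha => ?_)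
      exact as_succ_not_as ha h1
    omega
  · have e1 : avF k l a b j i = 0 := by unfold avF; exact if_neg h1
    by_cases h2 : j ∈ Bs k l a b (i + 1)
    · have e2 : avF k l a b j (i + 1) = 0 := by
        unfold avF; exact if_neg (fun ha => mem_As_not_bs ha h2)
      have e3 : bvF k l a b j (i + 1) ≤ 1 := by unfold bvF; split <;> omega
      omega
    · have e2 : bvF k l a b j (i + 1) = 0 := by unfold bvF; exact if_neg h2
      have e3 : avF k l a b j (i + 1) ≤ 1 := by unfold avF; split <;> omega
      omega

lemma strand8 (j : Fin k) (i : ℕ) :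
    bvF k l a b j i + avF k l a b j i + bvF k l a b j (i + 1) ≤ 1 := by
  by_cases h1 : j ∈ Bs k l a b i
  · have e1 : avF k l a b j i = 0 := by
      unfold avF; exact if_neg (fun ha => mem_As_not_bs ha h1)
    have e2 : bvF k l a b j (i + 1) = 0 := by
      unfold bvF; exact if_neg (fun hb => bs_succ_not_bs hb h1)
    have e3 : bvF k l a b j i ≤ 1 := by unfold bvF; split <;> omega
    omega
  · have e1 : bvF k l a b j i = 0 := by unfold bvF; exact if_neg h1
    by_cases h2 : j ∈ As k l a b i
    · have e2 : bvF k l a b j (i + 1) = 0 := by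
        unfold bvF; exact if_neg (fun hb => bs_succ_not_as hb h2)
      have e3 : avF k l a b j i ≤ 1 := by unfold avF; split <;> omega
      omega
    · have e2 : avF k l a b j i = 0 := by unfold avF; exact if_neg h2
      have e3 : bvF k l a b j (i + 1) ≤ 1 := by unfold bvF; split <;> omega
      omega

lemma strand11 {N : ℕ} (hN : 1 ≤ N) (hPendN : Pend k l a b N = ∅)
    (hBsN : ∀ s, N ≤ s → Bs k l a b s = ∅) (j : Fin k) (i : ℕ) :
    (∑ s ∈ Icc i N, bvF k l a b j s) ≤ ∑ s ∈ Icc (i + 1) N, avF k l a b j s := by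
  by_cases hiN : i < N
  · obtain ⟨M, rfl⟩ : ∃ M, N = M + 1 := ⟨N - 1, by omega⟩
    have hKp := Kp (l := l) (a := a) (b := b) j i M (by omega)
    have hν : nu k l a b j M = 0 := by
      unfold nu; rw [hPendN]; exact if_neg (notMem_empty j)
    rw [← Finset.Ico_add_one_right_eq_Icc,
      Finset.sum_Ico_succ_top (by omega : i ≤ M + 1) (bvF k l a b j),
      ← Finset.Ico_add_one_right_eq_Icc,
      Finset.sum_Ico_succ_top (by omega : i + 1 ≤ M + 1) (avF k l a b j)]
    have hb1 : bvF k l a b j (M + 1) = 0 := by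
      unfold bvF; rw [hBsN (M + 1) le_rfl]; exact if_neg (notMem_empty j)
    omega
  · have hz : ∀ s ∈ Icc i N, bvF k l a b j s = 0 := by
      intro s hs
      have h1 := (mem_Icc.mp hs).1
      unfold bvF; rw [hBsN s (by omega)]; exact if_neg (notMem_empty j)
    rw [Finset.sum_eq_zero hz]
    exact Nat.zero_le _

lemma strand12 {N : ℕ} (hN : 1 ≤ N) (hPendN : Pend k l a b N = ∅)
    (hBsN : ∀ s, N ≤ s → Bs k l a b s = ∅) (j : Fin k) :
    lvF k l a b j + (∑ s ∈ Icc 0 N, bvF k l a b j s)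
      ≤ ∑ s ∈ Icc 0 N, avF k l a b j s := by
  obtain ⟨M, rfl⟩ : ∃ M, N = M + 1 := ⟨N - 1, by omega⟩
  have hK := K0p (l := l) (a := a) (b := b) j M
  have hν : nu k l a b j M = 0 := by
    unfold nu; rw [hPendN]; exact if_neg (notMem_empty j)
  rw [← Finset.Ico_add_one_right_eq_Icc,
    Finset.sum_Ico_succ_top (by omega : 0 ≤ M + 1) (bvF k l a b j),
    Finset.sum_Ico_succ_top (by omega : 0 ≤ M + 1) (avF k l a b j)]
  have hb1 : bvF k l a b j (M + 1) = 0 := by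
    unfold bvF; rw [hBsN (M + 1) le_rfl]; exact if_neg (notMem_empty j)
  omega

lemma sum_avF (q : ℕ) (hcard : (As k l a b q).card = a q) :
    (∑ j, avF k l a b j q) = a q := by
  unfold avF
  rw [Fintype.sum_ite_mem]
  simpa using hcard

lemma sum_bvF (q : ℕ) (hcard : (Bs k l a b q).card = b q) :
    (∑ j, bvF k l a b j q) = b q := by
  unfold bvF
  rw [Fintype.sum_ite_mem]
  simpa using hcard

lemma sum_lvF (hcard : (Pend k l a b 0).card = l) :
    (∑ j, lvF k l a b j) = l := by
  unfold lvF
  rw [Fintype.sum_ite_mem]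
  simpa using hcard

end Machine


theorem decomp (k l N : ℕ) (hk : 1 ≤ k) (hl : l ≤ k) (hN : 1 ≤ N)
    (a b : ℕ → ℕ) (h : IsCombPath k l N a b) :
    ∃ (lv : Fin k → ℕ) (av bv : Fin k → ℕ → ℕ),
      (∀ j, lv j ≤ 1) ∧ (∑ j, lv j) = l ∧
      (∀ j, IsCombPath 1 (lv j) N (av j) (bv j)) ∧
      (∀ i, (∑ j, av j i) = a i) ∧ (∀ i, (∑ j, bv j i) = b i) := by
  obtain ⟨hak, hbk, hb0, haN, hbN, ha0l, hW1, hW2, hT9, hT10, hT11, hT12⟩ := h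
  have hT9r : ∀ m t : ℕ, m < t →
      (∑ s ∈ Ico m (t + 1), b s) ≤ k + ∑ s ∈ Ico (m + 1) (t - 1), a s := by
    intro m t hmt
    have h1 := hT9 m t hmt
    rwa [← Finset.Ico_add_one_right_eq_Icc] at h1
  have hT10r : ∀ t : ℕ, l + (∑ s ∈ range (t + 1), b s) ≤ k + ∑ s ∈ range (t - 1), a s := by
    intro t
    have h1 := hT10 t
    rwa [show Icc 0 t = range (t + 1) by rw [Finset.range_eq_Ico, Finset.Ico_add_one_right_eq_Icc],
      show Ico 0 (t - 1) = range (t - 1) by rw [Finset.range_eq_Ico]] at h1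
  have hT11r : ∀ m : ℕ, (∑ s ∈ Ico m (N + 1), b s) ≤ ∑ s ∈ Ico (m + 1) (N + 1), a s := by
    intro m
    have h1 := hT11 m
    rw [← Finset.Ico_add_one_right_eq_Icc, ← Finset.Ico_add_one_right_eq_Icc] at h1
    omega
  have hT12r : l + (∑ s ∈ range (N + 1), b s) ≤ ∑ s ∈ range (N + 1), a s := by
    have h1 := hT12
    rw [show Icc 0 N = range (N + 1) by rw [Finset.range_eq_Ico, Finset.Ico_add_one_right_eq_Icc]] at h1
    omega
  have hW1' : ∀ q, A0 a q + b q + a q ≤ k := by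
    intro q
    cases q with
    | zero => rw [A0_zero, hb0]; simpa using hak 0
    | succ q' => rw [A0_succ]; exact hW1 q'
  have hB1 : ∀ q, pfun l a b q + A0 a q + b q ≤ k := by
    intro q
    cases q with
    | zero => rw [pfun_zero, A0_zero, hb0]; omega
    | succ q' =>
        have h0 : (l : ℤ) + ∑ s ∈ range (q' + 1), (b s : ℤ)
            ≤ ((k : ℤ) - a q' - b (q' + 1)) + ∑ s ∈ range (q' + 1), (a s : ℤ) := by
          have h1 := hT10r (q' + 1)
          rw [show q' + 1 - 1 = q' by omega] at h1
          have e1 : (∑ s ∈ range (q' + 1 + 1), b s) = (∑ s ∈ range (q' + 1), b s) + b (q' + 1) :=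
            Finset.sum_range_succ b (q' + 1)
          have e2 : (∑ s ∈ range (q' + 1), a s) = (∑ s ∈ range q', a s) + a q' :=
            Finset.sum_range_succ a q'
          rw [show (∑ s ∈ range (q' + 1), (b s : ℤ))
                = ((∑ s ∈ range (q' + 1), b s : ℕ) : ℤ) from (Nat.cast_sum _ _).symm,
            show (∑ s ∈ range (q' + 1), (a s : ℤ))
                = ((∑ s ∈ range (q' + 1), a s : ℕ) : ℤ) from (Nat.cast_sum _ _).symm]
          omega
        have hw : ∀ q₀, 1 ≤ q₀ → q₀ ≤ q' + 1 →
            (∑ s ∈ Ico (q₀ - 1) (q' + 1), (b s : ℤ))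
              ≤ ((k : ℤ) - a q' - b (q' + 1)) + ∑ s ∈ Ico q₀ (q' + 1), (a s : ℤ) := by
          intro q₀ hq1 hq2
          obtain ⟨m, rfl⟩ : ∃ m, q₀ = m + 1 := ⟨q₀ - 1, by omega⟩
          rw [show m + 1 - 1 = m by omega]
          by_cases hmq : m + 1 ≤ q'
          · have h3 := hT9r m (q' + 1) (by omega)
            rw [show q' + 1 - 1 = q' by omega] at h3
            have e1 : (∑ s ∈ Ico m (q' + 1 + 1), b s)
                = (∑ s ∈ Ico m (q' + 1), b s) + b (q' + 1) :=
              Finset.sum_Ico_succ_top (by omega) b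
            have e2 : (∑ s ∈ Ico (m + 1) (q' + 1), a s)
                = (∑ s ∈ Ico (m + 1) q', a s) + a q' :=
              Finset.sum_Ico_succ_top (by omega) a
            rw [show (∑ s ∈ Ico m (q' + 1), (b s : ℤ))
                  = ((∑ s ∈ Ico m (q' + 1), b s : ℕ) : ℤ) from (Nat.cast_sum _ _).symm,
              show (∑ s ∈ Ico (m + 1) (q' + 1), (a s : ℤ))
                  = ((∑ s ∈ Ico (m + 1) (q' + 1), a s : ℕ) : ℤ) from (Nat.cast_sum _ _).symm]
            omega
          · have hm : m = q' := by omega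
            subst hm
            rw [show Ico m (m + 1) = {m} by rw [Finset.Ico_add_one_right_eq_Icc, Finset.Icc_self],
              Finset.sum_singleton, Finset.Ico_self, Finset.sum_empty]
            have h4 := hW2 m
            omega
        have hz := pfun_le (l := l) (a := a) (b := b) (q' + 1)
          ((k : ℤ) - a q' - b (q' + 1)) h0 hw
        rw [A0_succ]
        omega
  have hpN0 : pfun l a b N = 0 := by
    have h0 : (l : ℤ) + ∑ s ∈ range N, (b s : ℤ) ≤ (0 : ℤ) + ∑ s ∈ range N, (a s : ℤ) := by
      have h1 := hT12r
      have e1 : (∑ s ∈ range (N + 1), b s) = (∑ s ∈ range N, b s) + b N :=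
        Finset.sum_range_succ b N
      have e2 : (∑ s ∈ range (N + 1), a s) = (∑ s ∈ range N, a s) + a N :=
        Finset.sum_range_succ a N
      have e3 : b N = 0 := hbN N le_rfl
      have e4 : a N = 0 := haN N le_rfl
      rw [show (∑ s ∈ range N, (b s : ℤ)) = ((∑ s ∈ range N, b s : ℕ) : ℤ) from
          (Nat.cast_sum _ _).symm,
        show (∑ s ∈ range N, (a s : ℤ)) = ((∑ s ∈ range N, a s : ℕ) : ℤ) from
          (Nat.cast_sum _ _).symm]
      omega
    have hw : ∀ q₀, 1 ≤ q₀ → q₀ ≤ N →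
        (∑ s ∈ Ico (q₀ - 1) N, (b s : ℤ)) ≤ (0 : ℤ) + ∑ s ∈ Ico q₀ N, (a s : ℤ) := by
      intro q₀ hq1 hq2
      obtain ⟨m, rfl⟩ : ∃ m, q₀ = m + 1 := ⟨q₀ - 1, by omega⟩
      rw [show m + 1 - 1 = m by omega]
      have h3 := hT11r m
      have e1 : (∑ s ∈ Ico m (N + 1), b s) = (∑ s ∈ Ico m N, b s) + b N :=
        Finset.sum_Ico_succ_top (by omega) b
      have e2 : (∑ s ∈ Ico (m + 1) (N + 1), a s) = (∑ s ∈ Ico (m + 1) N, a s) + a N :=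
        Finset.sum_Ico_succ_top (by omega) a
      have e3 : b N = 0 := hbN N le_rfl
      have e4 : a N = 0 := haN N le_rfl
      rw [show (∑ s ∈ Ico m N, (b s : ℤ)) = ((∑ s ∈ Ico m N, b s : ℕ) : ℤ) from
          (Nat.cast_sum _ _).symm,
        show (∑ s ∈ Ico (m + 1) N, (a s : ℤ)) = ((∑ s ∈ Ico (m + 1) N, a s : ℕ) : ℤ) from
          (Nat.cast_sum _ _).symm]
      omega
    have hz := pfun_le (l := l) (a := a) (b := b) N 0 h0 hw
    omega
  have hcard := cards (k := k) hl hB1 hW1'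
  have hfull : ∀ q, (Bs k l a b q).card = b q ∧ (As k l a b q).card = a q ∧
      (Exr k l a b q).card = a q - pfun l a b q := by
    intro q
    have h1 := cards_aux hB1 hW1' q (hcard q).1 (hcard q).2
    exact ⟨h1.1, h1.2.1, h1.2.2.1⟩
  have hPendN : Pend k l a b N = ∅ := card_eq_zero.mp (by rw [(hcard N).1, hpN0])
  have hBsge : ∀ s, N ≤ s → Bs k l a b s = ∅ := fun s hs =>
    card_eq_zero.mp (by rw [(hfull s).1, hbN s hs])
  have hAsge : ∀ s, N ≤ s → As k l a b s = ∅ := fun s hs =>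
    card_eq_zero.mp (by rw [(hfull s).2.1, haN s hs])
  have hBs0 : Bs k l a b 0 = ∅ := card_eq_zero.mp (by rw [(hfull 0).1, hb0])
  have hEx0 : Exr k l a b 0 = ∅ :=
    card_eq_zero.mp (by rw [(hfull 0).2.2, pfun_zero]; omega)
  refine ⟨lvF k l a b, avF k l a b, bvF k l a b, ?_, ?_, ?_, ?_, ?_⟩
  · intro j; unfold lvF; split <;> omega
  · exact sum_lvF (by rw [(hcard 0).1, pfun_zero])
  · intro j
    refine ⟨?_, ?_, ?_, ?_, ?_, ?_, ?_, ?_, ?_, ?_, ?_, ?_⟩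
    · intro i; unfold avF; split <;> omega
    · intro i; unfold bvF; split <;> omega
    · unfold bvF; rw [hBs0]; exact if_neg (notMem_empty j)
    · intro i hi; unfold avF; rw [hAsge i hi]; exact if_neg (notMem_empty j)
    · intro i hi; unfold bvF; rw [hBsge i hi]; exact if_neg (notMem_empty j)
    · by_cases hja : j ∈ As k l a b 0
      · have hs : j ∈ Sv k l a b 0 := by
          have h1 := hja
          rw [As_eq, mem_union] at h1
          rcases h1 with hs | he
          · exact hs
          · rw [hEx0] at he; exact absurd he (notMem_empty j)
        have hp : j ∈ Pend k l a b 0 := Sv_subset_pend 0 hs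
        have e1 : lvF k l a b j = 1 := by unfold lvF; exact if_pos hp
        have e2 : avF k l a b j 0 ≤ 1 := by unfold avF; split <;> omega
        omega
      · have e1 : avF k l a b j 0 = 0 := by unfold avF; exact if_neg hja
        omega
    · intro i; exact strand7 j i
    · intro i; exact strand8 j i
    · intro i t hit; exact strand9 j i t hit
    · intro t; exact strand10 j t
    · intro i
      have h1 := strand11 hN hPendN hBsge j i
      omega
    · have h1 := strand12 hN hPendN hBsge j
      omega
  · intro i; exact sum_avF i (hfull i).2.1
  · intro i; exact sum_bvF i (hfull i).1

end Stmt3Aux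

/-- Every combinatorial path of level `k` is a componentwise sum of `k`
combinatorial paths of level `1`, with weights `l_j ∈ {0,1}` summing to `l`. -/
theorem stmt_3 (k l N : ℕ) (hk : 1 ≤ k) (hl : l ≤ k) (hN : 1 ≤ N)
    (a b : ℕ → ℕ) (h : IsCombPath k l N a b) :
    ∃ (lv : Fin k → ℕ) (av bv : Fin k → ℕ → ℕ),
      (∀ j, lv j ≤ 1) ∧ (∑ j, lv j) = l ∧
      (∀ j, IsCombPath 1 (lv j) N (av j) (bv j)) ∧
      (∀ i, (∑ j, av j i) = a i) ∧ (∀ i, (∑ j, bv j i) = b i) := by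
  exact Stmt3Aux.decomp k l N hk hl hN a b h
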